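/- Let Ω = B(0,1) \ B(0,r₀) ⊂ ℝ² with 0 < r₀ < 1, k a positive integer, and σ > 0. The function u(r,θ) = e^{ikθ}(r^k + c·r^{-k}) with c = (k - σ)/(k + σ) is harmonic on Ω and satisfies the Steklov condition ∂_ν u = σ u on both boundary circles r = 1 and r = r₀ if and only if σ is a root of p_k(σ) = σ² - σ k ((1+r₀)/r₀)((1+r₀^{2k})/(1-r₀^{2k})) + k²/r₀. -/

import Mathlib

open Complex

lemma hasDerivAt_aux (a b : ℂ) (n m : ℤ) (s : ℝ) (hs : s ≠ 0) :
    HasDerivAt (fun x : ℝ => a * (x:ℂ)^n + b * (x:ℂ)^m)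
      (a * ((n:ℂ) * (s:ℂ)^(n-1)) + b * ((m:ℂ) * (s:ℂ)^(m-1))) s := by
  have hs' : (s:ℂ) ≠ 0 := Complex.ofReal_ne_zero.mpr hs
  exact (((hasDerivAt_zpow n _ (Or.inl hs')).const_mul a).add
    ((hasDerivAt_zpow m _ (Or.inl hs')).const_mul b)).comp_ofReal

lemma hasDerivAt_exp_aux (k : ℕ) (θ : ℝ) :
    HasDerivAt (fun t : ℝ => Complex.exp (Complex.I * k * t))
      (Complex.I * k * Complex.exp (Complex.I * k * θ)) θ := by
  have h1 : HasDerivAt (fun z : ℂ => Complex.I * (k:ℂ) * z) (Complex.I * k) (θ:ℂ) := by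
    simpa using (hasDerivAt_id (θ:ℂ)).const_mul (Complex.I * (k:ℂ))
  have := ((Complex.hasDerivAt_exp (Complex.I * k * θ)).comp (θ:ℂ) h1).comp_ofReal
  simpa [mul_comm] using this

/-- On the annulus `Ω = B(0,1) \ B(0,r₀) ⊂ ℝ²` (in polar coordinates, with
outward normal `∂_r` at `r = 1` and `-∂_r` at `r = r₀`), the function
`u(r,θ) = e^{ikθ}(r^k + c r^{-k})` with `c = (k-σ)/(k+σ)` is harmonic and
satisfies the Steklov condition `∂_ν u = σ u` on both boundary circles if and
only if `σ` is a root of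
`p_k(σ) = σ² - σ k ((1+r₀)/r₀)((1+r₀^{2k})/(1-r₀^{2k})) + k²/r₀`. -/
theorem annulus_steklov_characterization (r₀ : ℝ) (h0 : 0 < r₀) (h1 : r₀ < 1)
    (k : ℕ) (hk : 0 < k) (σ : ℝ) (hσ : 0 < σ)
    (c : ℝ) (hc : c = ((k : ℝ) - σ) / ((k : ℝ) + σ))
    (u : ℝ → ℝ → ℂ)
    (hu : ∀ r θ : ℝ, u r θ = Complex.exp (Complex.I * k * θ)
        * ((r : ℂ) ^ (k : ℤ) + (c : ℂ) * (r : ℂ) ^ (-(k : ℤ)))) :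
    ((∀ r θ : ℝ, r₀ < r → r < 1 →
        deriv (deriv (fun s => u s θ)) r
          + (1 / (r : ℂ)) * deriv (fun s => u s θ) r
          + (1 / (r : ℂ) ^ 2) * deriv (deriv (fun t => u r t)) θ = 0) ∧
      (∀ θ : ℝ, deriv (fun s => u s θ) 1 = (σ : ℂ) * u 1 θ) ∧
      (∀ θ : ℝ, -deriv (fun s => u s θ) r₀ = (σ : ℂ) * u r₀ θ))
    ↔ σ ^ 2 - σ * k * ((1 + r₀) / r₀) * ((1 + r₀ ^ (2 * k)) / (1 - r₀ ^ (2 * k)))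
        + (k : ℝ) ^ 2 / r₀ = 0 := by
  set E : ℝ → ℂ := fun θ => Complex.exp (Complex.I * k * θ) with hE
  have hEne : ∀ θ, E θ ≠ 0 := fun θ => Complex.exp_ne_zero _
  have hkσ : (k : ℝ) + σ ≠ 0 := by positivity
  -- first radial derivative
  have hd1 : ∀ (θ r : ℝ), r ≠ 0 → HasDerivAt (fun s => u s θ)
      (E θ * ((k:ℂ)*(r:ℂ)^((k:ℤ)-1) - (c:ℂ)*(k:ℂ)*(r:ℂ)^(-(k:ℤ)-1))) r := by
    intro θ r hr
    have h := (hasDerivAt_aux 1 c k (-k) r hr).const_mul (E θ)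
    have heq : (fun s : ℝ => E θ * ((1:ℂ)*(s:ℂ)^(k:ℤ) + (c:ℂ)*(s:ℂ)^(-(k:ℤ))))
        = fun s => u s θ := by
      funext s; rw [hu]; ring
    rw [heq] at h
    refine h.congr_deriv ?_
    push_cast; ring
  -- second radial derivative
  have hd2 : ∀ (θ r : ℝ), r ≠ 0 → deriv (deriv (fun s => u s θ)) r
      = E θ * ((k:ℂ)*((k:ℂ)-1)*(r:ℂ)^((k:ℤ)-1-1)
          + (c:ℂ)*(k:ℂ)*((k:ℂ)+1)*(r:ℂ)^(-(k:ℤ)-1-1)) := by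
    intro θ r hr
    have hev : deriv (fun s => u s θ) =ᶠ[nhds r]
        (fun s : ℝ => E θ * ((k:ℂ)*(s:ℂ)^((k:ℤ)-1) + (-((c:ℂ)*(k:ℂ)))*(s:ℂ)^(-(k:ℤ)-1))) := by
      filter_upwards [eventually_ne_nhds hr] with s hs
      rw [(hd1 θ s hs).deriv]; ring
    rw [hev.deriv_eq]
    have h := (hasDerivAt_aux (k:ℂ) (-((c:ℂ)*(k:ℂ))) ((k:ℤ)-1) (-(k:ℤ)-1) r hr).const_mul (E θ)
    rw [h.deriv]
    push_cast; ring
  -- θ second derivative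
  have hdθ : ∀ (r θ : ℝ), deriv (deriv (fun t => u r t)) θ
      = -((k:ℂ)^2) * E θ
        * ((r:ℂ)^(k:ℤ) + (c:ℂ)*(r:ℂ)^(-(k:ℤ))) := by
    intro r θ
    have hfunθ : (fun t => u r t) = fun t : ℝ => Complex.exp (Complex.I * k * t)
        * ((r:ℂ)^(k:ℤ) + (c:ℂ)*(r:ℂ)^(-(k:ℤ))) := funext (hu r)
    rw [hfunθ]
    have h1 : deriv (fun t : ℝ => Complex.exp (Complex.I * k * t)
        * ((r:ℂ)^(k:ℤ) + (c:ℂ)*(r:ℂ)^(-(k:ℤ))))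
        = fun t : ℝ => (Complex.I * k * Complex.exp (Complex.I * k * t))
          * ((r:ℂ)^(k:ℤ) + (c:ℂ)*(r:ℂ)^(-(k:ℤ))) :=
      funext fun t => ((hasDerivAt_exp_aux k t).mul_const _).deriv
    rw [h1]
    have h2 := (((hasDerivAt_exp_aux k θ).const_mul (Complex.I * (k:ℂ))).mul_const
      ((r:ℂ)^(k:ℤ) + (c:ℂ)*(r:ℂ)^(-(k:ℤ)))).deriv
    rw [h2]
    linear_combination ((k:ℂ)^2 * (E θ * ((r:ℂ)^(k:ℤ) + (c:ℂ)*(r:ℂ)^(-(k:ℤ)))))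
      * Complex.I_mul_I
  -- main body
  have hr₀ne : r₀ ≠ 0 := h0.ne'
  have harm : ∀ r θ : ℝ, r₀ < r → r < 1 →
      deriv (deriv (fun s => u s θ)) r
        + (1 / (r : ℂ)) * deriv (fun s => u s θ) r
        + (1 / (r : ℂ) ^ 2) * deriv (deriv (fun t => u r t)) θ = 0 := by
    intro r θ hra hrb
    have hr : r ≠ 0 := (lt_trans h0 hra).ne'
    have hw : (r:ℂ) ≠ 0 := Complex.ofReal_ne_zero.mpr hr
    rw [hd2 θ r hr, (hd1 θ r hr).deriv, hdθ r θ]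
    simp only [zpow_sub₀ hw, zpow_neg, zpow_natCast, zpow_one]
    have hwk : (r:ℂ)^k ≠ 0 := pow_ne_zero _ hw
    field_simp
    ring_nf
  have st1 : ∀ θ : ℝ, deriv (fun s => u s θ) 1 = (σ : ℂ) * u 1 θ := by
    intro θ
    rw [(hd1 θ 1 one_ne_zero).deriv, hu]
    simp only [Complex.ofReal_one, one_zpow]
    have hkσC : ((k:ℕ):ℂ) + (σ:ℂ) ≠ 0 := by
      exact_mod_cast Complex.ofReal_ne_zero.mpr hkσ
    have hcc : (k:ℂ) - (c:ℂ)*(k:ℂ) = (σ:ℂ)*(1+(c:ℂ)) := by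
      rw [hc]; push_cast; field_simp; ring
    linear_combination E θ * hcc
  have st2iff : (∀ θ : ℝ, -deriv (fun s => u s θ) r₀ = (σ : ℂ) * u r₀ θ) ↔
      (-((k:ℝ)*r₀^((k:ℤ)-1) - c*(k:ℝ)*r₀^(-(k:ℤ)-1)) = σ*(r₀^(k:ℤ) + c*r₀^(-(k:ℤ)))) := by
    constructor
    · intro h
      have h0' := h 0
      rw [(hd1 0 r₀ hr₀ne).deriv, hu] at h0'
      simp only [Complex.ofReal_zero, mul_zero, Complex.exp_zero, one_mul, hE] at h0'
      exact_mod_cast h0'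
    · intro h θ
      rw [(hd1 θ r₀ hr₀ne).deriv, hu]
      have hC : -((k:ℂ)*(r₀:ℂ)^((k:ℤ)-1) - (c:ℂ)*(k:ℂ)*(r₀:ℂ)^(-(k:ℤ)-1))
          = (σ:ℂ)*((r₀:ℂ)^(k:ℤ) + (c:ℂ)*(r₀:ℂ)^(-(k:ℤ))) := by exact_mod_cast h
      linear_combination E θ * hC
  have key : (-((k:ℝ)*r₀^((k:ℤ)-1) - c*(k:ℝ)*r₀^(-(k:ℤ)-1)) = σ*(r₀^(k:ℤ) + c*r₀^(-(k:ℤ))))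
      ↔ (σ ^ 2 - σ * k * ((1 + r₀) / r₀) * ((1 + r₀ ^ (2 * k)) / (1 - r₀ ^ (2 * k)))
        + (k : ℝ) ^ 2 / r₀ = 0) := by
    have ht : 0 < r₀^k := pow_pos h0 k
    have ht1 : r₀^k < 1 := pow_lt_one₀ h0.le h1 hk.ne'
    have h2k : r₀^(2*k) = (r₀^k)^2 := by rw [mul_comm, pow_mul]
    have hne : 1 - (r₀^k)^2 ≠ 0 := by nlinarith
    rw [hc, h2k, zpow_sub₀ hr₀ne, zpow_sub₀ hr₀ne, zpow_neg, zpow_natCast, zpow_one]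
    constructor
    · intro h
      field_simp at h ⊢
      have hAt : ((k:ℝ)+σ) * r₀^k ≠ 0 := by positivity
      have h2 : (((k:ℝ)+σ) * r₀^k) *
          ((σ ^ 2 * (r₀ * (1 - (r₀ ^ k) ^ 2)) - σ * ↑k * (1 + r₀) * (1 + (r₀ ^ k) ^ 2)) * r₀ +
            ↑k ^ 2 * (r₀ * (1 - (r₀ ^ k) ^ 2))) = 0 := by linear_combination (((k:ℝ)+σ) * r₀^k * r₀) * h
      linear_combination h
    · intro h
      field_simp at h ⊢
      linear_combination h
  constructor
  · rintro ⟨-, -, h3⟩; exact key.mp (st2iff.mp h3)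
  · intro hp; exact ⟨harm, st1, st2iff.mpr (key.mpr hp)⟩
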